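/- Let α₁,…,α_a be positive integers (a ≥ 1), let k > 0 be a real number, l ≥ 1, and λ ∈ ℝ^l. Consider the polytope P_{α,λ} = { M ∈ ℝ^{a×l} : M_{ij} ≥ 0 for all i,j; Σ_{j=1}^{l} M_{ij} = k for every row i; Σ_{i=1}^{a} α_i M_{ij} = λ_j for every column j }. If P_{α,λ} contains a matrix all of whose entries are strictly positive, then the dimension of the affine span of P_{α,λ} equals (a−1)(l−1). -/

import Mathlib

open MvPolynomial Finset

noncomputable section

/-- Complete homogeneous symmetric polynomial `h_d` evaluated at the family `y i`, `i ∈ s`: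
the sum, over all multisets of size `d` with elements in `s`, of the corresponding products. -/
def hSum {ι : Type*} [DecidableEq ι] {R : Type*} [CommRing R]
    (d : ℕ) (s : Finset ι) (y : ι → R) : R :=
  ∑ t ∈ s.sym d, ((t : Multiset ι).map y).prod

/-- Elementary symmetric polynomial `e_d` evaluated at the family `y i`, `i ∈ s`. -/
def eSum {ι : Type*} [DecidableEq ι] {R : Type*} [CommRing R]
    (d : ℕ) (s : Finset ι) (y : ι → R) : R :=
  ∑ t ∈ s.powersetCard d, ∏ i ∈ t, y i

/-- The monomial `x^c` in `m` variables. -/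
def monom (m : ℕ) (c : Fin m → ℕ) : MvPolynomial (Fin m) ℤ := ∏ j, X j ^ c j

/-- `h_d` applied to the list of all monomials of degree `k` in `m` variables:
the character of `S^d(S^k W)` for `dim W = m`. -/
def charS (d k m : ℕ) : MvPolynomial (Fin m) ℤ :=
  hSum d (Finset.Nat.antidiagonalTuple m k) (monom m)

/-- `e_d` applied to the list of all monomials of degree `k` in `m` variables:
the character of `Λ^d(S^k W)` for `dim W = m`. -/
def charW (d k m : ℕ) : MvPolynomial (Fin m) ℤ :=
  eSum d (Finset.Nat.antidiagonalTuple m k) (monom m)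

/-- `h_k(x_1,…,x_m)`. -/
def hpoly (m k : ℕ) : MvPolynomial (Fin m) ℤ :=
  ∑ c ∈ Finset.Nat.antidiagonalTuple m k, monom m c

/-- `h_k(x_1^r,…,x_m^r)`. -/
def hkPow (m k r : ℕ) : MvPolynomial (Fin m) ℤ :=
  ∑ c ∈ Finset.Nat.antidiagonalTuple m k, ∏ j, X j ^ (r * c j)

/-- The Vandermonde product `Δ(x) = ∏_{i<j} (x_i - x_j)`. -/
def vand (m : ℕ) : MvPolynomial (Fin m) ℤ :=
  ∏ p ∈ (Finset.univ : Finset (Fin m × Fin m)).filter (fun p => p.1 < p.2),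
    (X p.1 - X p.2)

/-- The coefficient of the monomial with exponent vector `e`. -/
def coeffOf {m : ℕ} (e : Fin m → ℕ) (P : MvPolynomial (Fin m) ℤ) : ℤ :=
  MvPolynomial.coeff (Finsupp.equivFunOnFinite.symm e) P

/-- `N_α(k; μ)`: the number of `(α,μ)`-matrices, i.e. of nonnegative integral `a × m`
matrices all of whose row sums are `k` and whose `α`-weighted column sums are `μ`. -/
def Nmat {a m : ℕ} (α : Fin a → ℕ) (k : ℕ) (μ : Fin m → ℤ) : ℕ :=
  Set.ncard {M : Fin a → Fin m → ℕ |
    (∀ i, ∑ j, M i j = k) ∧ ∀ j, ∑ i, (α i : ℤ) * (M i j : ℤ) = μ j}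

/-- `N_α(k; μ)` for `α` given as a list. -/
def NmatL (αs : List ℕ) {m : ℕ} (k : ℕ) (μ : Fin m → ℤ) : ℕ :=
  Nmat (fun i : Fin αs.length => αs.get i) k μ

/-- `D_ρ`: the number of permutations in `S_d` of cycle type `ρ` (a partition of `d`);
Mathlib's `cycleType` records only the cycles of length at least 2. -/
def Dnum (d : ℕ) (ρ : Nat.Partition d) : ℕ :=
  ((Finset.univ : Finset (Equiv.Perm (Fin d))).filter
    (fun σ => σ.cycleType = ρ.parts.filter (fun r => 2 ≤ r))).card

def Lmap (a l : ℕ) (α : Fin a → ℕ) :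
    (Fin a → Fin l → ℝ) →ₗ[ℝ] (Fin a → ℝ) × (Fin l → ℝ) where
  toFun M := (fun i => ∑ j, M i j, fun j => ∑ i, (α i : ℝ) * M i j)
  map_add' M N := by
    refine Prod.ext ?_ ?_ <;> funext x <;>
      simp [Finset.sum_add_distrib, mul_add]
  map_smul' c M := by
    refine Prod.ext ?_ ?_ <;> funext x <;>
      simp [Finset.mul_sum, mul_assoc, mul_left_comm]

def fmap (a l : ℕ) (α : Fin a → ℕ) : ((Fin a → ℝ) × (Fin l → ℝ)) →ₗ[ℝ] ℝ where
  toFun p := (∑ i, (α i : ℝ) * p.1 i) - ∑ j, p.2 j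
  map_add' p q := by simp [Finset.sum_add_distrib, mul_add]; ring
  map_smul' c p := by
    simp [Finset.mul_sum, mul_sub, mul_assoc, mul_left_comm]

lemma range_Lmap (a l : ℕ) (ha : 1 ≤ a) (hl : 1 ≤ l) (α : Fin a → ℕ)
    (hα : ∀ i, 0 < α i) :
    LinearMap.range (Lmap a l α) = LinearMap.ker (fmap a l α) := by
  haveI : NeZero a := ⟨by omega⟩
  haveI : NeZero l := ⟨by omega⟩
  apply le_antisymm
  · rintro _ ⟨M, rfl⟩
    simp only [LinearMap.mem_ker, Lmap, fmap, LinearMap.coe_mk, AddHom.coe_mk]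
    rw [sub_eq_zero]
    simp_rw [Finset.mul_sum]
    exact Finset.sum_comm
  · rintro ⟨r, c⟩ hrc
    simp only [LinearMap.mem_ker, fmap, LinearMap.coe_mk, AddHom.coe_mk, sub_eq_zero] at hrc
    set A : ℝ := ∑ i, (α i : ℝ) with hA
    have hApos : 0 < A := by
      apply Finset.sum_pos (fun i _ => by exact_mod_cast hα i)
      exact Finset.univ_nonempty
    have hA0 : A ≠ 0 := ne_of_gt hApos
    set S : ℝ := ∑ i, (α i : ℝ) * r i with hS
    refine ⟨fun i j => r i / l + (c j - S / l) / A, ?_⟩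
    have hl0 : (l : ℝ) ≠ 0 := by positivity
    simp only [Lmap, LinearMap.coe_mk, AddHom.coe_mk]
    have hzero : ∑ i : Fin l, (c i - S / l) = 0 := by
      rw [Finset.sum_sub_distrib, ← hrc, Finset.sum_const, Finset.card_univ,
        Fintype.card_fin, nsmul_eq_mul]
      field_simp
      ring
    refine Prod.ext ?_ ?_ <;> funext x <;> dsimp only
    · rw [Finset.sum_add_distrib]
      have h2 : ∑ j : Fin l, (c j - S / ↑l) / A = 0 := by
        rw [← Finset.sum_div, hzero, zero_div]
      rw [h2, add_zero, Finset.sum_const, Finset.card_univ, Fintype.card_fin,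
        nsmul_eq_mul]
      field_simp
    · simp only [mul_add, Finset.sum_add_distrib]
      simp_rw [← mul_div_assoc]
      rw [← Finset.sum_div, ← Finset.sum_div, ← hS, ← Finset.sum_mul, ← hA,
        mul_div_cancel_left₀ _ hA0]
      ring

theorem matrix_polytope_dimension (a l : ℕ) (ha : 1 ≤ a) (hl : 1 ≤ l)
    (α : Fin a → ℕ) (hα : ∀ i, 0 < α i) (k : ℝ) (hk : 0 < k) (lam : Fin l → ℝ)
    (hpos : ∃ M : Fin a → Fin l → ℝ,
      ((∀ i j, 0 ≤ M i j) ∧ (∀ i, ∑ j, M i j = k) ∧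
        (∀ j, ∑ i, (α i : ℝ) * M i j = lam j)) ∧ (∀ i j, 0 < M i j)) :
    Module.finrank ℝ
        (affineSpan ℝ {M : Fin a → Fin l → ℝ |
          (∀ i j, 0 ≤ M i j) ∧ (∀ i, ∑ j, M i j = k) ∧
          (∀ j, ∑ i, (α i : ℝ) * M i j = lam j)}).direction
      = (a - 1) * (l - 1) := by
  classical
  haveI : NeZero a := ⟨by omega⟩
  haveI : NeZero l := ⟨by omega⟩
  obtain ⟨M₀, hM₀P, hM₀pos⟩ := hpos
  set P : Set (Fin a → Fin l → ℝ) := {M : Fin a → Fin l → ℝ |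
      (∀ i j, 0 ≤ M i j) ∧ (∀ i, ∑ j, M i j = k) ∧
      (∀ j, ∑ i, (α i : ℝ) * M i j = lam j)} with hPdef
  have hLP : ∀ p ∈ P, Lmap a l α p = (fun _ => k, lam) := by
    intro p hp
    simp only [Lmap, LinearMap.coe_mk, AddHom.coe_mk]
    exact Prod.ext (funext fun i => hp.2.1 i) (funext fun j => hp.2.2 j)
  -- Step 1: the direction is the kernel of Lmap.
  have hdir : (affineSpan ℝ P).direction = LinearMap.ker (Lmap a l α) := by
    rw [direction_affineSpan]
    apply le_antisymm
    · rw [vectorSpan_def, Submodule.span_le]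
      rintro v hv
      rw [Set.mem_vsub] at hv
      obtain ⟨p, hp, q, hq, rfl⟩ := hv
      simp only [SetLike.mem_coe, LinearMap.mem_ker, vsub_eq_sub, map_sub,
        hLP p hp, hLP q hq, sub_self]
    · intro v hv
      -- kernel conditions
      have hv1 : ∀ i, ∑ j, v i j = 0 := by
        intro i
        have := congrFun (congrArg Prod.fst (LinearMap.mem_ker.1 hv)) i
        simpa [Lmap] using this
      have hv2 : ∀ j, ∑ i, (α i : ℝ) * v i j = 0 := by
        intro j
        have := congrFun (congrArg Prod.snd (LinearMap.mem_ker.1 hv)) j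
        simpa [Lmap] using this
      -- choose ε > 0 with M₀ + ε v entrywise nonnegative
      have hne : (Finset.univ : Finset (Fin a × Fin l)).Nonempty := Finset.univ_nonempty
      set δ : ℝ := Finset.inf' Finset.univ hne (fun p : Fin a × Fin l => M₀ p.1 p.2) with hδ
      set C : ℝ := Finset.sup' Finset.univ hne (fun p : Fin a × Fin l => |v p.1 p.2|) with hC
      have hδpos : 0 < δ := by
        rw [hδ, Finset.lt_inf'_iff]
        exact fun p _ => hM₀pos p.1 p.2
      have hCle : ∀ p : Fin a × Fin l, |v p.1 p.2| ≤ C := fun p =>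
        Finset.le_sup' (fun q : Fin a × Fin l => |v q.1 q.2|) (Finset.mem_univ p)
      have hCnn : 0 ≤ C := le_trans (abs_nonneg _) (hCle hne.choose)
      set ε : ℝ := δ / (C + 1) with hε
      have hεpos : 0 < ε := by positivity
      have hεC : ε * (C + 1) = δ := by
        rw [hε]; field_simp
      have hnonneg : ∀ i j, 0 ≤ M₀ i j + ε * v i j := by
        intro i j
        have h1 : δ ≤ M₀ i j := Finset.inf'_le _ (Finset.mem_univ (i, j))
        have h2 : |v i j| ≤ C := hCle (i, j)
        have h3 : ε * (-|v i j|) ≤ ε * v i j :=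
          mul_le_mul_of_nonneg_left (neg_abs_le _) hεpos.le
        have h4 : ε * |v i j| ≤ ε * C := mul_le_mul_of_nonneg_left h2 hεpos.le
        nlinarith
      have hM₁ : M₀ + ε • v ∈ P := by
        refine ⟨fun i j => ?_, fun i => ?_, fun j => ?_⟩
        · simpa using hnonneg i j
        · simp only [Pi.add_apply, Pi.smul_apply, smul_eq_mul,
            Finset.sum_add_distrib, ← Finset.mul_sum, hv1 i, mul_zero, add_zero]
          exact hM₀P.2.1 i
        · simp only [Pi.add_apply, Pi.smul_apply, smul_eq_mul, mul_add,
            Finset.sum_add_distrib]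
          have heq : ∑ x : Fin a, (α x : ℝ) * (ε * v x j)
              = ε * ∑ x : Fin a, (α x : ℝ) * v x j := by
            rw [Finset.mul_sum]
            exact Finset.sum_congr rfl fun x _ => by ring
          rw [heq, hv2 j, mul_zero, add_zero]
          exact hM₀P.2.2 j
      have hmem : (M₀ + ε • v) -ᵥ M₀ ∈ vectorSpan ℝ P :=
        vsub_mem_vectorSpan ℝ hM₁ hM₀P
      have hvs : (M₀ + ε • v) -ᵥ M₀ = ε • v := by
        simp [vsub_eq_sub]
      rw [hvs] at hmem
      have := Submodule.smul_mem (vectorSpan ℝ P) ε⁻¹ hmem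
      rwa [smul_smul, inv_mul_cancel₀ hεpos.ne', one_smul] at this
  rw [hdir]
  -- Step 2: rank computation
  have h1 := LinearMap.finrank_range_add_finrank_ker (Lmap a l α)
  have hdom : Module.finrank ℝ (Fin a → Fin l → ℝ) = a * l := by
    rw [Module.finrank_pi_fintype]
    simp [Module.finrank_pi]
  have hf0 : fmap a l α ≠ 0 := by
    intro h
    have h2 : fmap a l α (Pi.single ⟨0, ha⟩ 1, 0) = (α ⟨0, ha⟩ : ℝ) := by
      simp [fmap, Pi.single_apply]
    rw [h] at h2
    simp only [LinearMap.zero_apply] at h2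
    have := hα ⟨0, ha⟩
    exact absurd h2.symm (by positivity)
  have hker := Module.Dual.finrank_ker_add_one_of_ne_zero hf0
  have hprod : Module.finrank ℝ ((Fin a → ℝ) × (Fin l → ℝ)) = a + l := by
    simp [Module.finrank_prod, Module.finrank_pi]
  rw [hprod] at hker
  have hrange : Module.finrank ℝ (LinearMap.range (Lmap a l α)) = a + l - 1 := by
    rw [range_Lmap a l ha hl α hα]
    omega
  rw [hdom, hrange] at h1
  obtain ⟨a', rfl⟩ : ∃ a', a = a' + 1 := ⟨a - 1, by omega⟩
  obtain ⟨l', rfl⟩ : ∃ l', l = l' + 1 := ⟨l - 1, by omega⟩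
  have hm : (a' + 1) * (l' + 1) = a' * l' + a' + l' + 1 := by ring
  simp only [Nat.add_sub_cancel]
  omega
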